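/- Let ω: [0,∞) → [0,∞) be non-decreasing with ω(0) = 0, ω(u) > 0 for all u > 0, and ∫_0^1 du/ω(u) = +∞ (Osgood condition). Let I ⊂ ℝ be an interval, Ω ⊆ ℝ^n an open set, φ: I → [0,∞) a locally integrable function, and b: I × Ω → ℝ^n a function satisfying |b(t,x) − b(t,y)| ≤ φ(t) ω(|x−y|) for all t ∈ I and all x, y ∈ Ω. If J ⊆ I is a subinterval, s ∈ J, and γ₁, γ₂: J → Ω are absolutely continuous curves such that γᵢ'(t) = b(t, γᵢ(t)) for almost every t ∈ J (i = 1,2) and γ₁(s) = γ₂(s), then γ₁(t) = γ₂(t) for all t ∈ J. -/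

import Mathlib

open MeasureTheory Set ENNReal

private lemma osgood_eps (ωe : ℝ → ℝ) (hmono : Monotone ωe)
    (hpos : ∀ u : ℝ, 0 < u → 0 < ωe u) (δ : ℝ) (hδ : 0 < δ)
    (hOs : ∫⁻ u in Set.Ioc (0:ℝ) δ, ENNReal.ofReal (1 / ωe u) = ⊤) (C : ℝ) :
    ∃ ε : ℝ, 0 < ε ∧ ε < δ ∧ C ≤ ∫ u in Set.Ioc ε δ, 1 / ωe u := by
  have hmeas : Measurable fun u : ℝ => ENNReal.ofReal (1 / ωe u) :=
    ENNReal.measurable_ofReal.comp (measurable_const.div hmono.measurable)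
  rcases le_or_gt C 0 with hC | hC
  · refine ⟨δ / 2, by linarith, by linarith, hC.trans ?_⟩
    refine setIntegral_nonneg measurableSet_Ioc fun u hu => ?_
    have := hpos u ((by linarith : (0:ℝ) < δ/2).trans hu.1)
    positivity
  · set fE : ℝ → ℝ≥0∞ := fun u => ENNReal.ofReal (1 / ωe u) with hfE
    set e : ℕ → ℝ := fun n => δ / (n + 2) with he
    have hepos : ∀ n, 0 < e n := fun n => by
      have : (0:ℝ) < (n:ℝ) + 2 := by positivity
      exact div_pos hδ this
    have helt : ∀ n, e n < δ := fun n => by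
      have h2 : (1:ℝ) < (n:ℝ) + 2 := by
        have : (0:ℝ) ≤ (n:ℝ) := Nat.cast_nonneg n
        linarith
      calc δ / ((n:ℝ) + 2) < δ / 1 := div_lt_div_of_pos_left hδ one_pos h2
        _ = δ := div_one δ
    have hanti : ∀ n, e (n + 1) ≤ e n := fun n => by
      apply div_le_div_of_nonneg_left hδ.le (by positivity)
      push_cast; linarith
    have hsup : (⨆ n, ∫⁻ u in Set.Ioc (e n) δ, fE u) = ⊤ := by
      have hmono_ind : Monotone fun n => (Set.Ioc (e n) δ).indicator fE := by
        intro m k hmk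
        have hsub : Set.Ioc (e m) δ ⊆ Set.Ioc (e k) δ :=
          Set.Ioc_subset_Ioc_left ((antitone_nat_of_succ_le hanti) hmk)
        exact Set.indicator_le_indicator_of_subset hsub (fun a => zero_le)
      have hind : ∀ n, Measurable ((Set.Ioc (e n) δ).indicator fE) := fun n =>
        hmeas.indicator measurableSet_Ioc
      have hpt : ∀ u, (⨆ n, (Set.Ioc (e n) δ).indicator fE u)
          = (Set.Ioc (0:ℝ) δ).indicator fE u := by
        intro u
        by_cases hu : u ∈ Set.Ioc (0:ℝ) δ
        · rw [Set.indicator_of_mem hu]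
          apply le_antisymm
          · refine iSup_le fun n => ?_
            by_cases h : u ∈ Set.Ioc (e n) δ
            · rw [Set.indicator_of_mem h]
            · rw [Set.indicator_of_notMem h]; exact zero_le
          · obtain ⟨n, hn⟩ : ∃ n : ℕ, e n < u := by
              obtain ⟨n, hn⟩ := exists_nat_gt (δ / u)
              refine ⟨n, ?_⟩
              show δ / ((n:ℝ) + 2) < u
              rw [div_lt_iff₀ (by positivity)]
              have h2 : δ / u < (n:ℝ) + 2 := by
                have : (0:ℝ) ≤ (n:ℝ) := Nat.cast_nonneg n
                linarith
              calc δ = (δ / u) * u := by rw [div_mul_cancel₀ _ (ne_of_gt hu.1)]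
                _ < ((n:ℝ) + 2) * u := mul_lt_mul_of_pos_right h2 hu.1
                _ = u * ((n:ℝ) + 2) := by ring
            refine le_iSup_of_le n ?_
            rw [Set.indicator_of_mem (show u ∈ Set.Ioc (e n) δ from ⟨hn, hu.2⟩)]
        · rw [Set.indicator_of_notMem hu]
          refine iSup_eq_zero.mpr fun n => ?_
          apply Set.indicator_of_notMem
          intro h
          exact hu ⟨(hepos n).trans h.1, h.2⟩
      calc (⨆ n, ∫⁻ u in Set.Ioc (e n) δ, fE u)
          = ⨆ n, ∫⁻ u, (Set.Ioc (e n) δ).indicator fE u := by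
            simp_rw [lintegral_indicator measurableSet_Ioc _]
        _ = ∫⁻ u, ⨆ n, (Set.Ioc (e n) δ).indicator fE u := (lintegral_iSup hind hmono_ind).symm
        _ = ∫⁻ u, (Set.Ioc (0:ℝ) δ).indicator fE u := by simp_rw [hpt]
        _ = ∫⁻ u in Set.Ioc (0:ℝ) δ, fE u := lintegral_indicator measurableSet_Ioc _
        _ = ⊤ := hOs
    obtain ⟨n, hn⟩ : ∃ n, ENNReal.ofReal C < ∫⁻ u in Set.Ioc (e n) δ, fE u :=
      lt_iSup_iff.mp (by rw [hsup]; exact ENNReal.ofReal_lt_top)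
    have hfin : (∫⁻ u in Set.Ioc (e n) δ, fE u) ≠ ⊤ := by
      have hbound : ∀ u ∈ Set.Ioc (e n) δ, fE u ≤ ENNReal.ofReal (1 / ωe (e n)) := by
        intro u hu
        exact ENNReal.ofReal_le_ofReal
          (one_div_le_one_div_of_le (hpos _ (hepos n)) (hmono hu.1.le))
      have : (∫⁻ u in Set.Ioc (e n) δ, fE u)
          ≤ ENNReal.ofReal (1 / ωe (e n)) * volume (Set.Ioc (e n) δ) := by
        calc (∫⁻ u in Set.Ioc (e n) δ, fE u)
            ≤ ∫⁻ _ in Set.Ioc (e n) δ, ENNReal.ofReal (1 / ωe (e n)) :=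
              setLIntegral_mono measurable_const hbound
          _ = ENNReal.ofReal (1 / ωe (e n)) * volume (Set.Ioc (e n) δ) := by
              rw [setLIntegral_const]
      refine ne_top_of_le_ne_top ?_ this
      refine (ENNReal.mul_lt_top ENNReal.ofReal_lt_top ?_).ne
      rw [Real.volume_Ioc]
      exact ENNReal.ofReal_lt_top
    refine ⟨e n, hepos n, helt n, ?_⟩
    have hnonneg : 0 ≤ᵐ[volume.restrict (Set.Ioc (e n) δ)] fun u => 1 / ωe u := by
      refine (ae_restrict_iff' measurableSet_Ioc).mpr (ae_of_all _ fun u hu => ?_)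
      have := hpos u ((hepos n).trans hu.1)
      positivity
    have haem : AEStronglyMeasurable (fun u => 1 / ωe u)
        (volume.restrict (Set.Ioc (e n) δ)) :=
      (measurable_const.div hmono.measurable).aestronglyMeasurable
    rw [integral_eq_lintegral_of_nonneg_ae hnonneg haem]
    calc C ≤ (ENNReal.ofReal C).toReal := by rw [ENNReal.toReal_ofReal hC.le]
      _ ≤ (∫⁻ u in Set.Ioc (e n) δ, fE u).toReal := ENNReal.toReal_mono hfin hn.le

open intervalIntegral

private lemma osgood_prod_ii (ωe : ℝ → ℝ) (hmono : Monotone ωe) (hωe0 : ∀ u, 0 ≤ ωe u)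
    (s T : ℝ) (φ g : ℝ → ℝ) (hφint : MeasureTheory.IntegrableOn φ (Set.Icc s T))
    (hgc : Continuous g) :
    ∀ τ ∈ Set.Icc s T, IntervalIntegrable (fun v => φ v * ωe (g v)) volume s τ := by
  obtain ⟨Mg, hMg⟩ := (isCompact_Icc (a := s) (b := T)).exists_bound_of_continuousOn
    hgc.continuousOn
  have hgmeas : Measurable fun v => ωe (g v) := hmono.measurable.comp hgc.measurable
  intro τ hτ
  have heq : (fun v => φ v * ωe (g v)) = fun v => ωe (g v) * φ v := by
    funext v; ring
  rw [heq]
  constructor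
  · apply Integrable.bdd_mul (c := ωe Mg)
      (hφint.mono_set (fun x hx => ⟨hx.1.le, hx.2.trans hτ.2⟩))
      hgmeas.aestronglyMeasurable
    filter_upwards [ae_restrict_mem measurableSet_Ioc] with x hx
    rw [Real.norm_eq_abs, abs_of_nonneg (hωe0 _)]
    apply hmono
    exact (le_abs_self _).trans ((Real.norm_eq_abs (g x)) ▸ hMg x ⟨hx.1.le, hx.2.trans hτ.2⟩)
  · rw [Set.Ioc_eq_empty (not_lt.mpr hτ.1)]
    exact integrableOn_empty

set_option maxHeartbeats 1000000 in
private lemma osgood_core (ωe : ℝ → ℝ) (hmono : Monotone ωe)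
    (hpos : ∀ u : ℝ, 0 < u → 0 < ωe u) (hωe0 : ∀ u, 0 ≤ ωe u)
    (hOs : ∫⁻ u in Set.Ioc (0:ℝ) 1, ENNReal.ofReal (1 / ωe u) = ⊤)
    (s T : ℝ) (hsT : s ≤ T)
    (φ g : ℝ → ℝ) (hφint : IntegrableOn φ (Set.Icc s T))
    (hφ0 : ∀ v ∈ Set.Icc s T, 0 ≤ φ v)
    (hgc : Continuous g) (hg0 : ∀ v, 0 ≤ g v) (hgs : g s = 0)
    (hkey : ∀ t ∈ Set.Icc s T, g t ≤ ∫ v in s..t, φ v * ωe (g v)) :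
    ∀ t ∈ Set.Icc s T, g t = 0 := by
  -- basic interval integrability of φ
  have hφii : ∀ p q, p ∈ Set.Icc s T → q ∈ Set.Icc s T →
      IntervalIntegrable φ volume p q := by
    intro p q hp hq
    apply MeasureTheory.IntegrableOn.intervalIntegrable
    apply hφint.mono_set
    rw [← Set.uIcc_of_le hsT]
    exact Set.uIcc_subset_uIcc (by rwa [Set.uIcc_of_le hsT]) (by rwa [Set.uIcc_of_le hsT])
  -- the clamped primitive of φ
  set cT : ℝ → ℝ := fun v => max s (min v T) with hcT
  have hcTmem : ∀ v, cT v ∈ Set.Icc s T := fun v =>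
    ⟨le_max_left _ _, max_le (by linarith [min_le_right v T]) (min_le_right v T)⟩
  have hcTid : ∀ v ∈ Set.Icc s T, cT v = v := fun v hv => by
    rw [hcT]; simp only [min_eq_left hv.2, max_eq_right hv.1]
  have hcTcont : Continuous cT := continuous_const.max (continuous_id.min continuous_const)
  set F : ℝ → ℝ := fun v => ∫ u in s..(cT v), φ u with hF
  have hFcont : Continuous F := by
    apply ContinuousOn.comp_continuous (continuousOn_primitive_interval ?_) hcTcont
    · intro v; rw [Set.uIcc_of_le hsT]; exact hcTmem v
    · rw [Set.uIcc_of_le hsT]; exact hφint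
  have hFdiff : ∀ p q, p ∈ Set.Icc s T → q ∈ Set.Icc s T →
      F q - F p = ∫ u in p..q, φ u := by
    intro p q hp hq
    have h1 := integral_add_adjacent_intervals (μ := volume) (f := φ)
      (hφii s p ⟨le_rfl, hsT⟩ hp) (hφii p q hp hq)
    rw [hF]; simp only [hcTid p hp, hcTid q hq]; linarith
  have hFmono : Monotone F := by
    intro p q hpq
    have h1 := hFdiff (cT p) (cT q) (hcTmem p) (hcTmem q)
    have h2 : cT p ≤ cT q := by
      rw [hcT]; exact max_le_max le_rfl (min_le_min hpq le_rfl)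
    have h3 : F (cT p) = F p := by
      rw [hF]; simp only [hcTid (cT p) (hcTmem p)]
    have h4 : F (cT q) = F q := by
      rw [hF]; simp only [hcTid (cT q) (hcTmem q)]
    have h5 : 0 ≤ ∫ u in cT p..cT q, φ u := by
      apply intervalIntegral.integral_nonneg h2
      intro u hu
      exact hφ0 u ⟨le_trans (hcTmem p).1 hu.1, le_trans hu.2 (hcTmem q).2⟩
    linarith
  have hFs : F s = 0 := by
    rw [hF]; simp only [hcTid s ⟨le_rfl, hsT⟩, intervalIntegral.integral_same]
  have hF0 : ∀ v, 0 ≤ F v := by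
    intro v
    apply intervalIntegral.integral_nonneg (hcTmem v).1
    intro u hu
    exact hφ0 u ⟨hu.1, le_trans hu.2 (hcTmem v).2⟩
  have hFle : ∀ v, F v ≤ F T := by
    intro v
    have : F (cT v) = F v := by rw [hF]; simp only [hcTid (cT v) (hcTmem v)]
    rw [← this]
    exact hFmono (hcTmem v).2
  -- fix t and target δ
  intro t ht
  by_contra hgt
  have hgtpos : 0 < g t := lt_of_le_of_ne (hg0 t) (Ne.symm hgt)
  set δ : ℝ := min (g t / 2) (1 / 2) with hδdef
  have hδpos : 0 < δ := lt_min (by linarith) (by norm_num)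
  have hδlt1 : δ < 1 := lt_of_le_of_lt (min_le_right _ _) (by norm_num)
  have hδltg : δ < g t := lt_of_le_of_lt (min_le_left _ _) (by linarith)
  -- suffices to show g t ≤ δ
  suffices hsuff : g t ≤ δ by linarith
  -- Osgood condition on (0, δ)
  have hOs' : ∫⁻ u in Set.Ioc (0:ℝ) δ, ENNReal.ofReal (1 / ωe u) = ⊤ := by
    by_contra hne
    have hsplit : Set.Ioc (0:ℝ) 1 = Set.Ioc (0:ℝ) δ ∪ Set.Ioc δ 1 :=
      (Set.Ioc_union_Ioc_eq_Ioc hδpos.le hδlt1.le).symm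
    have hfin2 : (∫⁻ u in Set.Ioc δ 1, ENNReal.ofReal (1 / ωe u)) ≠ ⊤ := by
      have hbound : ∀ u ∈ Set.Ioc δ 1, ENNReal.ofReal (1 / ωe u)
          ≤ ENNReal.ofReal (1 / ωe δ) := fun u hu =>
        ENNReal.ofReal_le_ofReal
          (one_div_le_one_div_of_le (hpos _ hδpos) (hmono hu.1.le))
      have hle : (∫⁻ u in Set.Ioc δ 1, ENNReal.ofReal (1 / ωe u))
          ≤ ENNReal.ofReal (1 / ωe δ) * volume (Set.Ioc δ 1) := by
        calc (∫⁻ u in Set.Ioc δ 1, ENNReal.ofReal (1 / ωe u))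
            ≤ ∫⁻ _ in Set.Ioc δ 1, ENNReal.ofReal (1 / ωe δ) :=
              setLIntegral_mono measurable_const hbound
          _ = ENNReal.ofReal (1 / ωe δ) * volume (Set.Ioc δ 1) := by
              rw [setLIntegral_const]
      refine ne_top_of_le_ne_top ?_ hle
      refine (ENNReal.mul_lt_top ENNReal.ofReal_lt_top ?_).ne
      rw [Real.volume_Ioc]
      exact ENNReal.ofReal_lt_top
    rw [hsplit, lintegral_union measurableSet_Ioc
      (Set.Ioc_disjoint_Ioc_of_le le_rfl)] at hOs
    exact (ENNReal.add_ne_top.mpr ⟨hne, hfin2⟩) hOs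
  obtain ⟨ε, hε0, hεδ, hεint⟩ := osgood_eps ωe hmono hpos δ hδpos hOs' (F T)
  have hε1 : ε < 1 := hεδ.trans hδlt1
  -- integrability of ν = 1/ωe on subintervals of [ε, 1]
  set ν : ℝ → ℝ := fun u => 1 / ωe u with hν
  have hνmeas : Measurable ν := measurable_const.div hmono.measurable
  have hνii : ∀ p q, p ∈ Set.Icc ε 1 → q ∈ Set.Icc ε 1 →
      IntervalIntegrable ν volume p q := by
    intro p q hp hq
    have key : ∀ p' q' : ℝ, ε ≤ p' → q' ≤ 1 → p' ≤ q' →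
        IntegrableOn ν (Set.Ioc p' q') volume := by
      intro p' q' h1 h3 h2
      apply Measure.integrableOn_of_bounded (M := 1 / ωe ε) measure_Ioc_lt_top.ne
        hνmeas.aestronglyMeasurable
      filter_upwards [ae_restrict_mem measurableSet_Ioc] with u hu
      have hu0 : 0 < ωe u := hpos u (lt_of_le_of_lt (le_trans hε0.le h1) hu.1)
      rw [Real.norm_eq_abs, abs_of_nonneg (by positivity)]
      exact one_div_le_one_div_of_le (hpos ε hε0) (hmono (h1.trans hu.1.le))
    rcases le_total p q with h | h
    · refine ⟨key p q hp.1 hq.2 h, ?_⟩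
      rw [Set.Ioc_eq_empty (not_lt.mpr h)]
      exact integrableOn_empty
    · refine ⟨?_, key q p hq.1 hp.2 h⟩
      rw [Set.Ioc_eq_empty (not_lt.mpr h)]
      exact integrableOn_empty
  -- the clamp to [ε, 1]
  set cE : ℝ → ℝ := fun x => min (max x ε) 1 with hcE
  have hcEmem : ∀ x, cE x ∈ Set.Icc ε 1 := fun x =>
    ⟨le_min (le_max_right _ _) hε1.le, min_le_right _ _⟩
  have hcEid : ∀ x ∈ Set.Icc ε 1, cE x = x := fun x hx => by
    rw [hcE]; simp only [max_eq_left hx.1, min_eq_left hx.2]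
  have hcEmono : Monotone cE := fun x y hxy =>
    min_le_min (max_le_max hxy le_rfl) le_rfl
  have hcEcont : Continuous cE := (continuous_id.max continuous_const).min continuous_const
  -- Φ and Ψ
  set Φ : ℝ → ℝ := fun x => ∫ u in (1:ℝ)..(cE x), ν u with hΦ
  have hΦeq : ∀ x, Φ (cE x) = Φ x := fun x => by
    rw [hΦ]; simp only [hcEid (cE x) (hcEmem x)]
  have hΦdiff : ∀ x y, Φ y - Φ x = ∫ u in (cE x)..(cE y), ν u := by
    intro x y
    have h1 := integral_add_adjacent_intervals (μ := volume) (f := ν)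
      (hνii 1 (cE x) ⟨hε1.le, le_rfl⟩ (hcEmem x)) (hνii (cE x) (cE y) (hcEmem x) (hcEmem y))
    rw [hΦ]; linarith
  have hΦmono : Monotone Φ := by
    intro x y hxy
    have h1 := hΦdiff x y
    have h2 : 0 ≤ ∫ u in (cE x)..(cE y), ν u := by
      apply intervalIntegral.integral_nonneg (hcEmono hxy)
      intro u hu
      have : 0 < ωe u := hpos u (lt_of_lt_of_le hε0 (le_trans (hcEmem x).1 hu.1))
      rw [hν]; positivity
    linarith
  have hΦcont : Continuous Φ := by
    apply ContinuousOn.comp_continuous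
      (continuousOn_primitive_interval' (hνii ε 1 ⟨le_rfl, hε1.le⟩ ⟨hε1.le, le_rfl⟩) ?_) hcEcont
    · intro x; rw [Set.uIcc_of_le hε1.le]; exact hcEmem x
    · rw [Set.uIcc_of_le hε1.le]; exact ⟨hε1.le, le_rfl⟩
  set Ψ : ℝ → ℝ := fun x => Φ x + (x - cE x) with hΨ
  have hΨid : ∀ x ∈ Set.Icc ε 1, Ψ x = Φ x := fun x hx => by
    rw [hΨ]; simp only [hcEid x hx]; ring
  have hlin_mono : Monotone fun x => x - cE x := by
    intro x y hxy
    simp only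
    have hmaxle : max y ε ≤ max x ε + (y - x) :=
      max_le (by linarith [le_max_left x ε]) (by linarith [le_max_right x ε])
    have h1 : cE y ≤ cE x + (y - x) := by
      rw [hcE]
      simp only
      rcases le_total (max x ε) 1 with ha | ha
      · calc min (max y ε) 1 ≤ max y ε := min_le_left _ _
          _ ≤ max x ε + (y - x) := hmaxle
          _ = min (max x ε) 1 + (y - x) := by rw [min_eq_left ha]
      · calc min (max y ε) 1 ≤ 1 := min_le_right _ _
          _ ≤ min (max x ε) 1 + (y - x) := by rw [min_eq_right ha]; linarith
    linarith
  have hΨsm : StrictMono Ψ := by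
    intro x y hxy
    rcases lt_or_ge (cE x) (cE y) with hc | hc
    · have hd := hΦdiff x y
      have hlow : (cE y - cE x) * (1 / ωe 1) ≤ ∫ u in (cE x)..(cE y), ν u := by
        have := intervalIntegral.integral_mono_on hc.le
          (_root_.intervalIntegrable_const (c := 1 / ωe 1))
          (hνii (cE x) (cE y) (hcEmem x) (hcEmem y))
          (fun u hu => one_div_le_one_div_of_le
            (hpos u (lt_of_lt_of_le hε0 (le_trans (hcEmem x).1 hu.1)))
            (hmono (le_trans hu.2 (hcEmem y).2)))
        rwa [intervalIntegral.integral_const, smul_eq_mul] at this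
      have hpos1 : 0 < (cE y - cE x) * (1 / ωe 1) := by
        have := hpos 1 one_pos
        have h2 : 0 < cE y - cE x := by linarith
        positivity
      have hl := hlin_mono hxy.le
      simp only [hΨ]
      simp only at hl
      linarith
    · have hceq : cE x = cE y := le_antisymm (hcEmono hxy.le) hc
      have hΦxy : Φ x = Φ y := by rw [hΦ]; simp only [hceq]
      simp only [hΨ, hΦxy, ← hceq]
      linarith
  have hΨcont : Continuous Ψ := hΦcont.add (continuous_id.sub hcEcont)
  have hΨlb : ∀ x, Φ ε + (x - 1) ≤ Ψ x := by
    intro x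
    have h1 : Φ ε ≤ Φ x := by
      rw [← hΦeq x]; exact hΦmono (hcEmem x).1
    have h2 : cE x ≤ 1 := (hcEmem x).2
    rw [hΨ]; simp only; linarith
  have hΨub : ∀ x, Ψ x ≤ x - ε := by
    intro x
    have h1 : Φ x ≤ Φ 1 := by rw [← hΦeq x]; exact hΦmono (hcEmem x).2
    have h2 : Φ 1 = 0 := by
      rw [hΦ]; simp only [hcEid 1 ⟨hε1.le, le_rfl⟩, intervalIntegral.integral_same]
    have h3 : ε ≤ cE x := (hcEmem x).1
    rw [hΨ]; simp only; linarith
  have hΨsurj : Function.Surjective Ψ := by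
    apply Continuous.surjective hΨcont
    · apply Filter.tendsto_atTop_mono hΨlb
      exact Filter.tendsto_atTop_add_const_left _ _ (Filter.tendsto_atTop_add_const_right _ _ Filter.tendsto_id)
    · apply Filter.tendsto_atBot_mono hΨub
      exact Filter.tendsto_atBot_add_const_right _ _ Filter.tendsto_id
  set E := StrictMono.orderIsoOfSurjective Ψ hΨsm hΨsurj with hE
  set R : ℝ → ℝ := fun y => E.symm y with hR
  have hRΨ : ∀ x, R (Ψ x) = x := fun x =>
    StrictMono.orderIsoOfSurjective_symm_apply_self Ψ hΨsm hΨsurj x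
  have hΨR : ∀ y, Ψ (R y) = y := by
    intro y
    have h1 : E (E.symm y) = y := E.apply_symm_apply y
    rwa [show (E : ℝ → ℝ) = Ψ from StrictMono.coe_orderIsoOfSurjective Ψ hΨsm hΨsurj] at h1
  have hRmono : Monotone R := fun a c h => (E.symm : ℝ ≃o ℝ).monotone h
  have hRcont : Continuous R := OrderIso.continuous (E.symm)
  -- difference of Ψ between ε and δ dominates F T
  have hΨδε : F T ≤ Ψ δ - Ψ ε := by
    have h1 := hΦdiff ε δ
    rw [hcEid ε ⟨le_rfl, hε1.le⟩, hcEid δ ⟨hεδ.le, hδlt1.le⟩] at h1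
    rw [intervalIntegral.integral_of_le hεδ.le] at h1
    rw [hΨid ε ⟨le_rfl, hε1.le⟩, hΨid δ ⟨hεδ.le, hδlt1.le⟩]
    linarith [hεint]
  -- the key inequality for R
  have hkeyR : ∀ y₁ y₂, Ψ ε ≤ y₁ → y₁ ≤ y₂ → y₂ ≤ Ψ δ →
      ωe (R y₁) * (y₂ - y₁) ≤ R y₂ - R y₁ := by
    intro y₁ y₂ h1 h12 h2
    have hR1 : ε ≤ R y₁ := by
      calc ε = R (Ψ ε) := (hRΨ ε).symm
        _ ≤ R y₁ := hRmono h1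
    have hR2 : R y₂ ≤ δ := by
      calc R y₂ ≤ R (Ψ δ) := hRmono h2
        _ = δ := hRΨ δ
    have hRR : R y₁ ≤ R y₂ := hRmono h12
    have hRin1 : R y₁ ∈ Set.Icc ε 1 := ⟨hR1, le_trans hRR (hR2.trans hδlt1.le)⟩
    have hRin2 : R y₂ ∈ Set.Icc ε 1 := ⟨hR1.trans hRR, hR2.trans hδlt1.le⟩
    have hd := hΦdiff (R y₁) (R y₂)
    rw [hcEid _ hRin1, hcEid _ hRin2] at hd
    have hy : y₂ - y₁ = ∫ u in (R y₁)..(R y₂), ν u := by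
      have e1 : Ψ (R y₁) = Φ (R y₁) := hΨid _ hRin1
      have e2 : Ψ (R y₂) = Φ (R y₂) := hΨid _ hRin2
      have e3 := hΨR y₁
      have e4 := hΨR y₂
      rw [e1] at e3
      rw [e2] at e4
      linarith
    have hb : (∫ u in (R y₁)..(R y₂), ν u) ≤ (R y₂ - R y₁) * (1 / ωe (R y₁)) := by
      have := intervalIntegral.integral_mono_on hRR
        (hνii _ _ hRin1 hRin2)
        (_root_.intervalIntegrable_const (c := 1 / ωe (R y₁)))
        (fun u hu => one_div_le_one_div_of_le (hpos _ (hε0.trans_le hR1)) (hmono hu.1))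
      rwa [intervalIntegral.integral_const, smul_eq_mul] at this
    have hw : 0 < ωe (R y₁) := hpos _ (hε0.trans_le hR1)
    rw [hy]
    calc ωe (R y₁) * ∫ u in (R y₁)..(R y₂), ν u
        ≤ ωe (R y₁) * ((R y₂ - R y₁) * (1 / ωe (R y₁))) :=
          mul_le_mul_of_nonneg_left hb hw.le
      _ = R y₂ - R y₁ := by field_simp
  -- the comparison function ρ
  set ρ : ℝ → ℝ := fun v => R (Ψ ε + F v) with hρ
  have hρcont : Continuous ρ := hRcont.comp (continuous_const.add hFcont)
  have hρmono : Monotone ρ := fun p q h =>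
    hRmono (by linarith [hFmono h] : Ψ ε + F p ≤ Ψ ε + F q)
  have hρs : ρ s = ε := by
    rw [hρ]; simp only [hFs, add_zero]; exact hRΨ ε
  have hylb : ∀ v, Ψ ε ≤ Ψ ε + F v := fun v => by linarith [hF0 v]
  have hyub : ∀ v, Ψ ε + F v ≤ Ψ δ := fun v => by linarith [hFle v, hΨδε]
  have hρlb : ∀ v, ε ≤ ρ v := fun v => by
    calc ε = R (Ψ ε) := (hRΨ ε).symm
      _ ≤ ρ v := hRmono (hylb v)
  have hρub : ∀ v, ρ v ≤ δ := fun v => by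
    calc ρ v ≤ R (Ψ δ) := hRmono (hyub v)
      _ = δ := hRΨ δ
  -- integrability of the products
  have hρmeas : Measurable fun v => ωe (ρ v) := hmono.measurable.comp hρcont.measurable
  have hρprodii : ∀ p q, p ∈ Set.Icc s T → q ∈ Set.Icc s T →
      IntervalIntegrable (fun v => φ v * ωe (ρ v)) volume p q := by
    intro p q hp hq
    have hφ' := hφii p q hp hq
    have hbd : ∃ C, ∀ x, ‖ωe (ρ x)‖ ≤ C := ⟨ωe 1, fun x => by
      rw [Real.norm_eq_abs, abs_of_nonneg (hωe0 _)]
      exact hmono ((hρub x).trans hδlt1.le)⟩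
    have heq : (fun v => φ v * ωe (ρ v)) = fun v => ωe (ρ v) * φ v := by
      funext v; ring
    rw [heq]
    exact ⟨hφ'.1.bdd_mul hρmeas.aestronglyMeasurable (ae_of_all _ hbd.choose_spec),
           hφ'.2.bdd_mul hρmeas.aestronglyMeasurable (ae_of_all _ hbd.choose_spec)⟩
  have hgprodii : ∀ τ ∈ Set.Icc s T,
      IntervalIntegrable (fun v => φ v * ωe (g v)) volume s τ :=
    osgood_prod_ii ωe hmono hωe0 s T φ g hφint hgc
  -- the partition estimate
  have hpart : ∀ τ ∈ Set.Icc s T, (∫ v in s..τ, φ v * ωe (ρ v)) ≤ ρ τ - ε := by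
    intro τ hτ
    rcases eq_or_lt_of_le hτ.1 with heq | hlt
    · rw [← heq, intervalIntegral.integral_same]
      linarith [hρs.ge, hρs.le]
    have hτT := hτ.2
    refine le_of_forall_pos_le_add fun η hη => ?_
    have hω1 : 0 < ωe 1 + 1 := by linarith [hωe0 1]
    set η' : ℝ := η / (ωe 1 + 1) with hη'
    have hη'pos : 0 < η' := div_pos hη hω1
    have hFuc := (isCompact_Icc (a := s) (b := T)).uniformContinuousOn_of_continuous
      hFcont.continuousOn
    obtain ⟨d, hd0, hd⟩ := Metric.uniformContinuousOn_iff.mp hFuc η' hη'pos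
    obtain ⟨N, hN⟩ := exists_nat_gt ((τ - s) / d)
    have hNpos : 0 < (N : ℝ) := lt_trans (div_pos (by linarith) hd0) hN
    set h0 : ℝ := (τ - s) / N with hh0
    have hh0pos : 0 < h0 := div_pos (by linarith) hNpos
    have hh0d : h0 < d := by
      rw [hh0, div_lt_iff₀ hNpos]
      calc τ - s = ((τ - s) / d) * d := by field_simp
        _ < N * d := mul_lt_mul_of_pos_right hN hd0
        _ = d * N := by ring
    set a : ℕ → ℝ := fun i => s + i * h0 with ha
    have ha0 : a 0 = s := by simp [ha]
    have haN : a N = τ := by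
      rw [ha]; simp only; rw [hh0]; field_simp; ring
    have hamono : ∀ i j : ℕ, i ≤ j → a i ≤ a j := fun i j hij => by
      rw [ha]; simp only
      have h1 : (i : ℝ) ≤ j := Nat.cast_le.mpr hij
      nlinarith
    have hamem : ∀ i : ℕ, i ≤ N → a i ∈ Set.Icc s T := by
      intro i hi
      constructor
      · rw [ha]; simp only
        have : (0:ℝ) ≤ i * h0 := by positivity
        linarith
      · have h1 : a i ≤ a N := hamono i N hi
        rw [haN] at h1; exact h1.trans hτT
    have hsplit : (∫ v in s..τ, φ v * ωe (ρ v))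
        = ∑ i ∈ Finset.range N, ∫ v in (a i)..(a (i + 1)), φ v * ωe (ρ v) := by
      rw [show s = a 0 from ha0.symm, show τ = a N from haN.symm]
      exact (intervalIntegral.sum_integral_adjacent_intervals fun i hi =>
        hρprodii _ _ (hamem i (le_of_lt hi)) (hamem (i + 1) hi)).symm
    have hterm : ∀ i ∈ Finset.range N,
        (∫ v in (a i)..(a (i + 1)), φ v * ωe (ρ v))
          ≤ (ρ (a (i + 1)) - ρ (a i))
            + (ωe (ρ (a (i + 1))) * η' - ωe (ρ (a i)) * η') := by
      intro i hi
      rw [Finset.mem_range] at hi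
      have hmi : a i ∈ Set.Icc s T := hamem i (le_of_lt hi)
      have hmi1 : a (i + 1) ∈ Set.Icc s T := hamem (i + 1) hi
      have haii : a i ≤ a (i + 1) := hamono i (i + 1) (Nat.le_succ i)
      have hΔ : F (a (i + 1)) - F (a i) = ∫ v in (a i)..(a (i + 1)), φ v :=
        hFdiff _ _ hmi hmi1
      have hΔ0 : 0 ≤ F (a (i + 1)) - F (a i) := by linarith [hFmono haii]
      have hΔη : F (a (i + 1)) - F (a i) ≤ η' := by
        have hdist : dist (a (i + 1)) (a i) < d := by
          rw [Real.dist_eq]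
          have : a (i + 1) - a i = h0 := by rw [ha]; push_cast; ring
          rw [this, abs_of_pos hh0pos]
          exact hh0d
        have := hd (a (i + 1)) hmi1 (a i) hmi hdist
        rw [Real.dist_eq] at this
        calc F (a (i + 1)) - F (a i) ≤ |F (a (i + 1)) - F (a i)| := le_abs_self _
          _ ≤ η' := this.le
      have hstep1 : (∫ v in (a i)..(a (i + 1)), φ v * ωe (ρ v))
          ≤ ∫ v in (a i)..(a (i + 1)), φ v * ωe (ρ (a (i + 1))) := by
        apply intervalIntegral.integral_mono_on haii (hρprodii _ _ hmi hmi1)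
          ((hφii _ _ hmi hmi1).mul_const _)
        intro v hv
        exact mul_le_mul_of_nonneg_left (hmono (hρmono hv.2))
          (hφ0 v ⟨hmi.1.trans hv.1, hv.2.trans hmi1.2⟩)
      have hstep2 : (∫ v in (a i)..(a (i + 1)), φ v * ωe (ρ (a (i + 1))))
          = (F (a (i + 1)) - F (a i)) * ωe (ρ (a (i + 1))) := by
        rw [intervalIntegral.integral_mul_const, hΔ]
      have hstep3 : ωe (ρ (a i)) * (F (a (i + 1)) - F (a i))
          ≤ ρ (a (i + 1)) - ρ (a i) := by
        have h3 := hkeyR (Ψ ε + F (a i)) (Ψ ε + F (a (i + 1))) (hylb _)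
          (by linarith) (hyub _)
        have he : (Ψ ε + F (a (i + 1))) - (Ψ ε + F (a i)) = F (a (i + 1)) - F (a i) := by
          ring
        rw [he] at h3
        exact h3
      have hwmono : ωe (ρ (a i)) ≤ ωe (ρ (a (i + 1))) := hmono (hρmono haii)
      have hmul : (ωe (ρ (a (i + 1))) - ωe (ρ (a i))) * (F (a (i + 1)) - F (a i))
          ≤ (ωe (ρ (a (i + 1))) - ωe (ρ (a i))) * η' :=
        mul_le_mul_of_nonneg_left hΔη (by linarith)
      have hid : (F (a (i + 1)) - F (a i)) * ωe (ρ (a (i + 1)))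
          = ωe (ρ (a i)) * (F (a (i + 1)) - F (a i))
            + (ωe (ρ (a (i + 1))) - ωe (ρ (a i))) * (F (a (i + 1)) - F (a i)) := by
        ring
      have hcomb : (F (a (i + 1)) - F (a i)) * ωe (ρ (a (i + 1)))
          ≤ (ρ (a (i + 1)) - ρ (a i))
            + (ωe (ρ (a (i + 1))) - ωe (ρ (a i))) * η' := by
        linarith
      calc (∫ v in (a i)..(a (i + 1)), φ v * ωe (ρ v))
          ≤ (F (a (i + 1)) - F (a i)) * ωe (ρ (a (i + 1))) := by
            rw [← hstep2]; exact hstep1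
        _ ≤ (ρ (a (i + 1)) - ρ (a i))
            + (ωe (ρ (a (i + 1))) - ωe (ρ (a i))) * η' := hcomb
        _ = (ρ (a (i + 1)) - ρ (a i))
            + (ωe (ρ (a (i + 1))) * η' - ωe (ρ (a i)) * η') := by ring
    calc (∫ v in s..τ, φ v * ωe (ρ v))
        = ∑ i ∈ Finset.range N, ∫ v in (a i)..(a (i + 1)), φ v * ωe (ρ v) := hsplit
      _ ≤ ∑ i ∈ Finset.range N, ((ρ (a (i + 1)) - ρ (a i))
            + (ωe (ρ (a (i + 1))) * η' - ωe (ρ (a i)) * η')) :=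
          Finset.sum_le_sum hterm
      _ = (ρ (a N) - ρ (a 0)) + (ωe (ρ (a N)) * η' - ωe (ρ (a 0)) * η') := by
          rw [Finset.sum_add_distrib, Finset.sum_range_sub (fun i => ρ (a i)),
            Finset.sum_range_sub (fun i => ωe (ρ (a i)) * η')]
      _ ≤ ρ τ - ε + η := by
          rw [ha0, haN, hρs]
          have h1 : ωe (ρ τ) ≤ ωe 1 := hmono ((hρub τ).trans hδlt1.le)
          have h2 : 0 ≤ ωe ε * η' := mul_nonneg (hωe0 _) hη'pos.le
          have h3 : ωe 1 * η' ≤ η := by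
            have h4 : ωe 1 * η' ≤ (ωe 1 + 1) * η' := by nlinarith [hωe0 1]
            have h5 : (ωe 1 + 1) * η' = η := by
              rw [hη']; field_simp
            linarith
          have h6 : ωe (ρ τ) * η' ≤ ωe 1 * η' := mul_le_mul_of_nonneg_right h1 hη'pos.le
          linarith
  -- the crossing argument
  have hcross : ∀ v ∈ Set.Icc s T, g v < ρ v := by
    by_contra hcon
    push_neg at hcon
    obtain ⟨v₀, hv₀mem, hv₀⟩ := hcon
    set S : Set ℝ := Set.Icc s T ∩ {v | ρ v ≤ g v} with hSdef
    have hSne : S.Nonempty := ⟨v₀, hv₀mem, hv₀⟩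
    have hSclosed : IsClosed S := isClosed_Icc.inter (isClosed_le hρcont hgc)
    have hSbdd : BddBelow S := ⟨s, fun v hv => hv.1.1⟩
    set τ := sInf S with hτdef
    have hτS : τ ∈ S := hSclosed.csInf_mem hSne hSbdd
    have hρτ : ρ τ ≤ g τ := hτS.2
    have hτmem : τ ∈ Set.Icc s T := hτS.1
    have hτs : s < τ := by
      rcases eq_or_lt_of_le hτmem.1 with he | hl
      · exfalso
        rw [← he, hρs, hgs] at hρτ
        linarith
      · exact hl
    have hltv : ∀ v ∈ Set.Ico s τ, g v < ρ v := by
      intro v hv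
      by_contra hno
      push_neg at hno
      have h1 : τ ≤ v := csInf_le hSbdd ⟨⟨hv.1, hv.2.le.trans hτmem.2⟩, hno⟩
      linarith [hv.2]
    have hmono_int : (∫ v in s..τ, φ v * ωe (g v)) ≤ ∫ v in s..τ, φ v * ωe (ρ v) := by
      apply intervalIntegral.integral_mono_ae_restrict hτs.le (hgprodii τ hτmem)
        (hρprodii s τ ⟨le_rfl, hsT⟩ hτmem)
      have hτ0 : (volume.restrict (Set.Icc s τ)) {τ} = 0 := by
        rw [Measure.restrict_apply (measurableSet_singleton τ)]
        exact measure_mono_null Set.inter_subset_left (Real.volume_singleton)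
      have hne : ∀ᵐ v ∂(volume.restrict (Set.Icc s τ)), v ≠ τ := by
        rw [ae_iff]
        convert hτ0 using 2
        ext v
        simp
      filter_upwards [hne, ae_restrict_mem measurableSet_Icc] with v hvne hvmem
      have hvI : v ∈ Set.Ico s τ := ⟨hvmem.1, lt_of_le_of_ne hvmem.2 hvne⟩
      exact mul_le_mul_of_nonneg_left (hmono (hltv v hvI).le)
        (hφ0 v ⟨hvI.1, hvmem.2.trans hτmem.2⟩)
    have h1 := hkey τ hτmem
    have h2 := hpart τ hτmem
    linarith
  have := hcross t ht
  linarith [hρub t]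
theorem stmt_5 (n : ℕ) (ω : ℝ → ℝ)
    (hω_mono : MonotoneOn ω (Set.Ici 0)) (hω0 : ω 0 = 0)
    (hω_pos : ∀ u : ℝ, 0 < u → 0 < ω u)
    (hOsgood : ∫⁻ u in Set.Ioc (0:ℝ) 1, ENNReal.ofReal (1 / ω u) = ⊤)
    (I : Set ℝ) (hI : I.OrdConnected)
    (Ω : Set (EuclideanSpace ℝ (Fin n))) (hΩ : IsOpen Ω)
    (φ : ℝ → ℝ) (hφ_nonneg : ∀ t ∈ I, 0 ≤ φ t) (hφ : LocallyIntegrableOn φ I)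
    (b : ℝ → EuclideanSpace ℝ (Fin n) → EuclideanSpace ℝ (Fin n))
    (hb : ∀ t ∈ I, ∀ x ∈ Ω, ∀ y ∈ Ω, ‖b t x - b t y‖ ≤ φ t * ω ‖x - y‖)
    (J : Set ℝ) (hJI : J ⊆ I) (hJ : J.OrdConnected) (s : ℝ) (hs : s ∈ J)
    (γ₁ γ₂ : ℝ → EuclideanSpace ℝ (Fin n))
    (hγ₁Ω : ∀ t ∈ J, γ₁ t ∈ Ω) (hγ₂Ω : ∀ t ∈ J, γ₂ t ∈ Ω)
    (hγ₁int : ∀ t ∈ J, IntervalIntegrable (fun v => b v (γ₁ v)) volume s t)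
    (hγ₂int : ∀ t ∈ J, IntervalIntegrable (fun v => b v (γ₂ v)) volume s t)
    (hγ₁ : ∀ t ∈ J, γ₁ t = γ₁ s + ∫ v in s..t, b v (γ₁ v))
    (hγ₂ : ∀ t ∈ J, γ₂ t = γ₂ s + ∫ v in s..t, b v (γ₂ v))
    (hinit : γ₁ s = γ₂ s) :
    ∀ t ∈ J, γ₁ t = γ₂ t := by
  -- extended modulus
  set ωe : ℝ → ℝ := fun u => ω (max u 0) with hωe
  have hmonoE : Monotone ωe := fun u v huv =>
    hω_mono (Set.mem_Ici.mpr (le_max_right u 0)) (Set.mem_Ici.mpr (le_max_right v 0))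
      (max_le_max huv le_rfl)
  have hωeq : ∀ u : ℝ, 0 ≤ u → ωe u = ω u := fun u hu => by
    rw [hωe]; simp only [max_eq_left hu]
  have hposE : ∀ u : ℝ, 0 < u → 0 < ωe u := fun u hu => by
    rw [hωeq u hu.le]; exact hω_pos u hu
  have hωe0' : ∀ u, 0 ≤ ωe u := fun u => by
    have h1 := hω_mono (Set.mem_Ici.mpr le_rfl) (Set.mem_Ici.mpr (le_max_right u 0))
      (le_max_right u 0)
    rw [hω0] at h1
    exact h1
  have hOsE : ∫⁻ u in Set.Ioc (0:ℝ) 1, ENNReal.ofReal (1 / ωe u) = ⊤ := by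
    rw [← hOsgood]
    apply setLIntegral_congr_fun measurableSet_Ioc
    exact fun u hu => by rw [hωeq u hu.1.le]
  -- the difference of the two curves
  set f : ℝ → EuclideanSpace ℝ (Fin n) := fun v => b v (γ₁ v) - b v (γ₂ v) with hf
  have hfii : ∀ u ∈ J, IntervalIntegrable f volume s u := fun u hu =>
    (hγ₁int u hu).sub (hγ₂int u hu)
  have hrep : ∀ u ∈ J, γ₁ u - γ₂ u = ∫ v in s..u, f v := by
    intro u hu
    rw [hγ₁ u hu, hγ₂ u hu, hinit,
      intervalIntegral.integral_sub (hγ₁int u hu) (hγ₂int u hu)]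
    abel
  set G : ℝ → EuclideanSpace ℝ (Fin n) := fun u => ∫ v in s..u, f v with hG
  intro t htJ
  rcases le_total s t with hst | hts
  · -- forward case
    have hIccJ : Set.Icc s t ⊆ J := hJ.out hs htJ
    have hφI : IntegrableOn φ (Set.Icc s t) :=
      hφ.integrableOn_compact_subset (fun x hx => hJI (hIccJ hx)) isCompact_Icc
    have hGcont : ContinuousOn G (Set.Icc s t) := by
      rw [← Set.uIcc_of_le hst]
      apply intervalIntegral.continuousOn_primitive_interval
      rw [Set.uIcc_of_le hst]
      exact (integrableOn_Icc_iff_integrableOn_Ioc).mpr (hfii t htJ).1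
    set c1 : ℝ → ℝ := fun v => max s (min v t) with hc1
    have hc1mem : ∀ v, c1 v ∈ Set.Icc s t := fun v =>
      ⟨le_max_left _ _, max_le (by linarith [min_le_right v t]) (min_le_right v t)⟩
    have hc1id : ∀ v ∈ Set.Icc s t, c1 v = v := fun v hv => by
      rw [hc1]; simp only [min_eq_left hv.2, max_eq_right hv.1]
    set gg : ℝ → ℝ := fun v => ‖G (c1 v)‖ with hgg
    have hggc : Continuous gg := by
      apply Continuous.norm
      exact hGcont.comp_continuous
        (continuous_const.max (continuous_id.min continuous_const)) hc1mem
    have hggval : ∀ u ∈ Set.Icc s t, gg u = ‖γ₁ u - γ₂ u‖ := by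
      intro u hu
      rw [hgg]; simp only
      rw [hc1id u hu]
      simp only [hG]
      rw [← hrep u (hIccJ hu)]
    have hggs : gg s = 0 := by
      rw [hgg]; simp only
      rw [hc1id s ⟨le_rfl, hst⟩]
      simp only [hG, intervalIntegral.integral_same]
      exact norm_zero
    have hkeyg : ∀ u ∈ Set.Icc s t, gg u ≤ ∫ v in s..u, φ v * ωe (gg v) := by
      intro u hu
      rw [hggval u hu, hrep u (hIccJ hu)]
      calc ‖∫ v in s..u, f v‖ ≤ ∫ v in s..u, ‖f v‖ :=
            intervalIntegral.norm_integral_le_integral_norm hu.1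
        _ ≤ ∫ v in s..u, φ v * ωe (gg v) := by
            apply intervalIntegral.integral_mono_on hu.1 ((hfii u (hIccJ hu)).norm)
              (osgood_prod_ii ωe hmonoE hωe0' s t φ gg hφI hggc u hu)
            intro v hv
            have hvmem : v ∈ Set.Icc s t := ⟨hv.1, hv.2.trans hu.2⟩
            have hvJ : v ∈ J := hIccJ hvmem
            have hb' := hb v (hJI hvJ) (γ₁ v) (hγ₁Ω v hvJ) (γ₂ v) (hγ₂Ω v hvJ)
            have he : ωe (gg v) = ω ‖γ₁ v - γ₂ v‖ := by
              rw [hggval v hvmem, hωeq _ (norm_nonneg _)]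
            rw [he]
            exact hb'
    have hzero := osgood_core ωe hmonoE hposE hωe0' hOsE s t hst φ gg hφI
      (fun v hv => hφ_nonneg v (hJI (hIccJ hv))) hggc (fun v => norm_nonneg _)
      hggs hkeyg t ⟨hst, le_rfl⟩
    rw [hggval t ⟨hst, le_rfl⟩] at hzero
    exact sub_eq_zero.mp (norm_eq_zero.mp hzero)
  · -- backward case
    have hIccJ : Set.Icc t s ⊆ J := hJ.out htJ hs
    have hT' : s ≤ 2 * s - t := by linarith
    have hφI : IntegrableOn φ (Set.Icc t s) :=
      hφ.integrableOn_compact_subset (fun x hx => hJI (hIccJ hx)) isCompact_Icc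
    -- reflected φ
    set φr : ℝ → ℝ := fun v => φ (2 * s - v) with hφr
    have hφrint : IntegrableOn φr (Set.Icc s (2 * s - t)) := by
      have h1 : IntervalIntegrable φ volume t s := by
        apply MeasureTheory.IntegrableOn.intervalIntegrable
        rw [Set.uIcc_of_le hts]
        exact hφI
      have h2 := h1.comp_sub_left (2 * s)
      have h3 : IntervalIntegrable φr volume (2 * s - t) s := by
        have he : (2:ℝ) * s - s = s := by ring
        rwa [he] at h2
      exact (integrableOn_Icc_iff_integrableOn_Ioc).mpr h3.symm.1
    have hφr0 : ∀ v ∈ Set.Icc s (2 * s - t), 0 ≤ φr v := by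
      intro v hv
      exact hφ_nonneg _ (hJI (hIccJ ⟨by linarith [hv.2], by linarith [hv.1]⟩))
    have hGcont : ContinuousOn G (Set.Icc t s) := by
      rw [← Set.uIcc_of_ge hts]
      apply intervalIntegral.continuousOn_primitive_interval
      rw [Set.uIcc_of_ge hts]
      exact (integrableOn_Icc_iff_integrableOn_Ioc).mpr (hfii t htJ).2
    set c2 : ℝ → ℝ := fun v => max t (min v s) with hc2
    have hc2mem : ∀ v, c2 v ∈ Set.Icc t s := fun v =>
      ⟨le_max_left _ _, max_le (by linarith [min_le_right v s]) (min_le_right v s)⟩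
    have hc2id : ∀ v ∈ Set.Icc t s, c2 v = v := fun v hv => by
      rw [hc2]; simp only [min_eq_left hv.2, max_eq_right hv.1]
    set gg2 : ℝ → ℝ := fun v => ‖G (c2 v)‖ with hgg2
    have hgg2c : Continuous gg2 := by
      apply Continuous.norm
      exact hGcont.comp_continuous
        (continuous_const.max (continuous_id.min continuous_const)) hc2mem
    have hgg2val : ∀ u ∈ Set.Icc t s, gg2 u = ‖γ₁ u - γ₂ u‖ := by
      intro u hu
      rw [hgg2]; simp only
      rw [hc2id u hu]
      simp only [hG]
      rw [← hrep u (hIccJ hu)]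
    set gr : ℝ → ℝ := fun v => gg2 (2 * s - v) with hgr
    have hgrc : Continuous gr := hgg2c.comp (continuous_const.sub continuous_id)
    have hmemr : ∀ u ∈ Set.Icc s (2 * s - t), 2 * s - u ∈ Set.Icc t s := by
      intro u hu
      exact ⟨by linarith [hu.2], by linarith [hu.1]⟩
    have hgrval : ∀ u ∈ Set.Icc s (2 * s - t), gr u = ‖γ₁ (2 * s - u) - γ₂ (2 * s - u)‖ := by
      intro u hu
      rw [hgr]; simp only
      exact hgg2val _ (hmemr u hu)
    have hgrs : gr s = 0 := by
      have h1 : (2:ℝ) * s - s = s := by ring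
      rw [hgr]; simp only [h1]
      rw [hgg2]; simp only
      rw [hc2id s ⟨hts, le_rfl⟩]
      simp only [hG, intervalIntegral.integral_same]
      exact norm_zero
    have hkeyr : ∀ u ∈ Set.Icc s (2 * s - t), gr u ≤ ∫ v in s..u, φr v * ωe (gr v) := by
      intro u hu
      have hwmem : 2 * s - u ∈ Set.Icc t s := hmemr u hu
      have hwJ : 2 * s - u ∈ J := hIccJ hwmem
      have hstep0 : gr u = ‖∫ v in (2 * s - u)..s, f v‖ := by
        rw [hgrval u hu, hrep _ hwJ, intervalIntegral.integral_symm, norm_neg]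
      have hstep1 : ‖∫ v in (2 * s - u)..s, f v‖ ≤ ∫ v in (2 * s - u)..s, ‖f v‖ :=
        intervalIntegral.norm_integral_le_integral_norm hwmem.2
      have hcv : (∫ x in s..u, ‖f (2 * s - x)‖) = ∫ v in (2 * s - u)..s, ‖f v‖ := by
        rw [intervalIntegral.integral_comp_sub_left (fun v => ‖f v‖) (2 * s)]
        congr 1
        ring
      have hnii : IntervalIntegrable (fun x => ‖f (2 * s - x)‖) volume s u := by
        have h1 := ((hfii _ hwJ).norm).comp_sub_left (2 * s)
        have he1 : (2:ℝ) * s - s = s := by ring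
        have he2 : (2:ℝ) * s - (2 * s - u) = u := by ring
        rwa [he1, he2] at h1
      have hstep2 : (∫ x in s..u, ‖f (2 * s - x)‖) ≤ ∫ v in s..u, φr v * ωe (gr v) := by
        apply intervalIntegral.integral_mono_on hu.1 hnii
          (osgood_prod_ii ωe hmonoE hωe0' s (2 * s - t) φr gr hφrint hgrc u hu)
        intro x hx
        have hxmem : x ∈ Set.Icc s (2 * s - t) := ⟨hx.1, hx.2.trans hu.2⟩
        have hwx : 2 * s - x ∈ Set.Icc t s := hmemr x hxmem
        have hwxJ : 2 * s - x ∈ J := hIccJ hwx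
        have hb' := hb (2 * s - x) (hJI hwxJ) (γ₁ (2 * s - x)) (hγ₁Ω _ hwxJ)
          (γ₂ (2 * s - x)) (hγ₂Ω _ hwxJ)
        have he : ωe (gr x) = ω ‖γ₁ (2 * s - x) - γ₂ (2 * s - x)‖ := by
          rw [hgrval x hxmem, hωeq _ (norm_nonneg _)]
        rw [he]
        exact hb'
      calc gr u = ‖∫ v in (2 * s - u)..s, f v‖ := hstep0
        _ ≤ ∫ v in (2 * s - u)..s, ‖f v‖ := hstep1
        _ = ∫ x in s..u, ‖f (2 * s - x)‖ := hcv.symm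
        _ ≤ ∫ v in s..u, φr v * ωe (gr v) := hstep2
    have hzero := osgood_core ωe hmonoE hposE hωe0' hOsE s (2 * s - t) hT' φr gr hφrint
      hφr0 hgrc (fun v => norm_nonneg _) hgrs hkeyr (2 * s - t) ⟨hT', le_rfl⟩
    have he2 : (2:ℝ) * s - (2 * s - t) = t := by ring
    rw [hgrval (2 * s - t) ⟨hT', le_rfl⟩, he2] at hzero
    exact sub_eq_zero.mp (norm_eq_zero.mp hzero)
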